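/- arXiv:1611.01921 — 3 statements merged into one kernel-verified Lean document; each statement's English description precedes it below -/
import Mathlib

section
/- Let p be a prime, α ≥ 1, and (n_d,...,n_1) positive integers of total weight N. Then har_{p^α}(n_d,...,n_1) − har_p(n_d,...,n_1) ∈ p^{N+1} Z_p. In particular, p^{−N} har_{p^α}(n_d,...,n_1) mod p is independent of α. -/
open Finset

/-- The multiple harmonic sum `∑_{0 < m_1 < ... < m_d < m} 1/(m_1^{n_1} ⋯ m_d^{n_d})`. -/
noncomputable def mhs (m : ℕ) {d : ℕ} (n : Fin d → ℕ) : ℚ :=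
  ∑ f ∈ Finset.univ.filter
      (fun f : Fin d → Fin m => (StrictMono fun i => (f i : ℕ)) ∧ ∀ i, 0 < (f i : ℕ)),
    ∏ i, (1 : ℚ) / ((f i : ℕ) : ℚ) ^ (n i)

/-- The weighted multiple harmonic sum `har_m(n_d,...,n_1) = m^{n_1+⋯+n_d} · mhs`. -/
noncomputable def har (m : ℕ) {d : ℕ} (n : Fin d → ℕ) : ℚ :=
  (m : ℚ) ^ (∑ i, n i) * mhs m n

section aux

variable {p α : ℕ}

/-- Bijection between tuples in `Fin p` and tuples in `Fin (p^α)` all of whose entries are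
divisible by `p^(α-1)`. -/
lemma aux_bij (hp : 0 < p) (hα : 1 ≤ α) {d : ℕ} (n : Fin d → ℕ) :
    ∑ f ∈ (Finset.univ.filter
        (fun f : Fin d → Fin (p ^ α) =>
          (StrictMono fun i => (f i : ℕ)) ∧ ∀ i, 0 < (f i : ℕ))).filter
        (fun f => ∀ i, p ^ (α - 1) ∣ (f i : ℕ)),
      ∏ i, (1 : ℚ) / ((f i : ℕ) : ℚ) ^ (n i)
    = ∑ g ∈ Finset.univ.filter
        (fun g : Fin d → Fin p =>
          (StrictMono fun i => (g i : ℕ)) ∧ ∀ i, 0 < (g i : ℕ)),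
      ∏ i, (1 : ℚ) / (((p ^ (α - 1) * (g i : ℕ) : ℕ)) : ℚ) ^ (n i) := by
  have hppow : 0 < p ^ (α - 1) := Nat.pow_pos hp
  have hpow_eq : p ^ (α - 1) * p = p ^ α := by
    rw [← pow_succ, Nat.sub_add_cancel hα]
  have hmul_lt : ∀ m : ℕ, m < p → p ^ (α - 1) * m < p ^ α := by
    intro m hm
    calc p ^ (α - 1) * m < p ^ (α - 1) * p := (Nat.mul_lt_mul_left hppow).2 hm
    _ = p ^ α := hpow_eq
  refine Finset.sum_nbij'
    (i := fun f k => (⟨(f k : ℕ) / p ^ (α - 1), ?_⟩ : Fin p))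
    (j := fun g k => (⟨p ^ (α - 1) * (g k : ℕ), hmul_lt _ (g k).2⟩ : Fin (p ^ α)))
    ?_ ?_ ?_ ?_ ?_
  · exact Nat.div_lt_of_lt_mul (by rw [hpow_eq]; exact (f k).2)
  · intro f hf
    simp only [Finset.mem_filter, Finset.mem_univ, true_and] at hf ⊢
    obtain ⟨⟨hsm, hpos⟩, hdvd⟩ := hf
    constructor
    · intro i j hij
      exact Nat.div_lt_div_of_lt_of_dvd (hdvd j) (hsm hij)
    · intro i
      exact Nat.div_pos (Nat.le_of_dvd (hpos i) (hdvd i)) hppow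
  · intro g hg
    simp only [Finset.mem_filter, Finset.mem_univ, true_and] at hg ⊢
    obtain ⟨hsm, hpos⟩ := hg
    refine ⟨⟨?_, ?_⟩, ?_⟩
    · intro i j hij
      exact (Nat.mul_lt_mul_left hppow).2 (hsm hij)
    · intro i
      exact Nat.mul_pos hppow (hpos i)
    · intro i
      exact dvd_mul_right _ _
  · intro f hf
    simp only [Finset.mem_filter, Finset.mem_univ, true_and] at hf
    funext k
    apply Fin.ext
    exact Nat.mul_div_cancel' (hf.2 k)
  · intro g hg
    funext k
    apply Fin.ext
    simp only
    exact Nat.mul_div_cancel_left _ hppow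
  · intro f hf
    simp only [Finset.mem_filter, Finset.mem_univ, true_and] at hf
    apply Finset.prod_congr rfl
    intro k _
    congr 2
    exact_mod_cast (Nat.mul_div_cancel' (hf.2 k)).symm

end aux

lemma aux_term (p : ℕ) [Fact p.Prime] (α : ℕ) (hα : 1 ≤ α) {d : ℕ} (n : Fin d → ℕ)
    (hn : ∀ i, 0 < n i) (f : Fin d → Fin (p ^ α)) (hpos : ∀ i, 0 < (f i : ℕ))
    (j : Fin d) (hj : ¬ p ^ (α - 1) ∣ (f j : ℕ)) :
    padicNorm p ((p : ℚ) ^ (α * ∑ i, n i) * ∏ i, (1 : ℚ) / ((f i : ℕ) : ℚ) ^ (n i))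
      ≤ (p : ℚ) ^ (-((∑ i, n i : ℤ) + 1)) := by
  have hp : p.Prime := Fact.out
  have hp0 : (p : ℚ) ≠ 0 := by exact_mod_cast hp.pos.ne'
  set N := ∑ i, n i with hN
  set M : ℕ := ∏ i, (f i : ℕ) ^ (n i) with hM
  have hM0 : M ≠ 0 := by
    rw [hM]
    exact Finset.prod_ne_zero_iff.2 fun i _ => pow_ne_zero _ (hpos i).ne'
  have hMQ : (M : ℚ) ≠ 0 := by exact_mod_cast hM0
  -- rewrite the term as a quotient of naturals
  have hterm : (p : ℚ) ^ (α * N) * ∏ i, (1 : ℚ) / ((f i : ℕ) : ℚ) ^ (n i)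
      = ((p ^ (α * N) : ℕ) : ℚ) / ((M : ℕ) : ℚ) := by
    rw [hM]
    push_cast
    rw [Finset.prod_div_distrib, Finset.prod_const_one]
    ring
  rw [hterm]
  have hq0 : ((p ^ (α * N) : ℕ) : ℚ) / ((M : ℕ) : ℚ) ≠ 0 := by
    apply div_ne_zero _ hMQ
    exact_mod_cast pow_ne_zero _ hp.pos.ne'
  -- valuation computations
  have hval : padicValRat p (((p ^ (α * N) : ℕ) : ℚ) / ((M : ℕ) : ℚ))
      = (α * N : ℤ) - padicValNat p M := by
    rw [padicValRat.div (by exact_mod_cast pow_ne_zero _ hp.pos.ne') hMQ,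
      padicValRat.of_nat, padicValRat.of_nat, padicValNat.prime_pow]
    push_cast
    ring
  have hfac : padicValNat p M = ∑ i, n i * padicValNat p (f i : ℕ) := by
    rw [← Nat.factorization_def _ hp, hM,
      Nat.factorization_prod (fun i _ => pow_ne_zero _ (hpos i).ne')]
    rw [Finsupp.finset_sum_apply]
    refine Finset.sum_congr rfl fun i _ => ?_
    rw [Nat.factorization_pow, Finsupp.smul_apply, smul_eq_mul,
      Nat.factorization_def _ hp]
  have hv_lt : ∀ i, padicValNat p ((f i : ℕ)) < α := by
    intro i
    by_contra h
    push_neg at h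
    have h1 : p ^ α ∣ (f i : ℕ) := dvd_trans (pow_dvd_pow p h) pow_padicValNat_dvd
    have h2 := Nat.le_of_dvd (hpos i) h1
    have h3 := (f i).isLt
    omega
  have hvj : padicValNat p ((f j : ℕ)) < α - 1 := by
    by_contra h
    push_neg at h
    exact hj ((hp.pow_dvd_iff_le_factorization (hpos j).ne').2
      (by rw [Nat.factorization_def _ hp]; exact h))
  -- the key inequality on the valuation of M
  have hsum : (padicValNat p M : ℤ) ≤ ((α : ℤ) - 1) * N - 1 := by
    have hMv : (padicValNat p M : ℤ)
        = ∑ i, (n i : ℤ) * (padicValNat p ((f i : ℕ)) : ℤ) := by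
      rw [hfac]; push_cast; rfl
    have hNs : (N : ℤ) = ∑ i, (n i : ℤ) := by rw [hN]; push_cast; rfl
    have hsplit := (Finset.add_sum_erase Finset.univ
      (fun i => (n i : ℤ) * (padicValNat p ((f i : ℕ)) : ℤ)) (Finset.mem_univ j))
    have hNsplit := (Finset.add_sum_erase Finset.univ
      (fun i => (n i : ℤ)) (Finset.mem_univ j))
    have h2 : (padicValNat p ((f j : ℕ)) : ℤ) ≤ (α : ℤ) - 2 := by
      have := hvj; omega
    have hb : ∑ i ∈ Finset.univ.erase j, (n i : ℤ) * (padicValNat p ((f i : ℕ)) : ℤ)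
        ≤ ∑ i ∈ Finset.univ.erase j, (n i : ℤ) * ((α : ℤ) - 1) := by
      refine Finset.sum_le_sum fun i _ => ?_
      have h1 : (padicValNat p ((f i : ℕ)) : ℤ) ≤ (α : ℤ) - 1 := by
        have := hv_lt i; omega
      exact mul_le_mul_of_nonneg_left h1 (by positivity)
    have hbj : (n j : ℤ) * (padicValNat p ((f j : ℕ)) : ℤ)
        ≤ (n j : ℤ) * ((α : ℤ) - 2) :=
      mul_le_mul_of_nonneg_left h2 (by positivity)
    have hsum_erase : ∑ i ∈ Finset.univ.erase j, (n i : ℤ) * ((α : ℤ) - 1)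
        = ((N : ℤ) - n j) * ((α : ℤ) - 1) := by
      rw [← Finset.sum_mul]
      congr 1
      linarith [hNsplit, hNs]
    have hnj : (1 : ℤ) ≤ (n j : ℤ) := by exact_mod_cast hn j
    rw [hMv, ← hsplit]
    calc (n j : ℤ) * (padicValNat p ((f j : ℕ)) : ℤ)
          + ∑ i ∈ Finset.univ.erase j, (n i : ℤ) * (padicValNat p ((f i : ℕ)) : ℤ)
        ≤ (n j : ℤ) * ((α : ℤ) - 2) + ((N : ℤ) - n j) * ((α : ℤ) - 1) := by
          rw [← hsum_erase]; exact add_le_add hbj hb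
      _ = ((α : ℤ) - 1) * N - n j := by ring
      _ ≤ ((α : ℤ) - 1) * N - 1 := by linarith
  -- conclude
  rw [padicNorm.eq_zpow_of_nonzero hq0, hval]
  apply zpow_le_zpow_right₀ (by exact_mod_cast hp.one_lt.le)
  have hNs : (∑ i, (n i : ℤ)) = (N : ℤ) := by rw [hN]; push_cast; rfl
  have hexp : ((α : ℤ) - 1) * (N : ℤ) = (α : ℤ) * N - N := by ring
  linarith [hsum, hexp, hNs]

/-- For a prime `p`, `α ≥ 1` and a tuple of positive integers of total weight `N`, we have
`har_{p^α}(n_d,...,n_1) − har_p(n_d,...,n_1) ∈ p^{N+1} ℤ_p`; in particular the reduction of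
`p^{-N} har_{p^α}(w)` modulo `p` is independent of `α`. -/
theorem har_prime_power_sub_har_prime (p : ℕ) [Fact p.Prime] (α : ℕ) (hα : 1 ≤ α)
    {d : ℕ} (n : Fin d → ℕ) (hn : ∀ i, 0 < n i) :
    ‖((har (p ^ α) n : ℚ) : ℚ_[p]) - ((har p n : ℚ) : ℚ_[p])‖
      ≤ (p : ℝ) ^ (-((∑ i, n i : ℤ) + 1)) := by
  classical
  have hp : p.Prime := Fact.out
  have hq0 : (p : ℚ) ≠ 0 := by exact_mod_cast hp.pos.ne'
  have hps : (p : ℚ) ^ α = (p : ℚ) ^ (α - 1) * p := by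
    rw [← pow_succ, Nat.sub_add_cancel hα]
  have key : har (p ^ α) n - har p n
      = ∑ f ∈ (Finset.univ.filter
          (fun f : Fin d → Fin (p ^ α) =>
            (StrictMono fun i => (f i : ℕ)) ∧ ∀ i, 0 < (f i : ℕ))).filter
          (fun f => ¬ ∀ i, p ^ (α - 1) ∣ (f i : ℕ)),
        (p : ℚ) ^ (α * ∑ i, n i) * ∏ i, (1 : ℚ) / ((f i : ℕ) : ℚ) ^ (n i) := by
    have hsplit := Finset.sum_filter_add_sum_filter_not
      (Finset.univ.filter
        (fun f : Fin d → Fin (p ^ α) =>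
          (StrictMono fun i => (f i : ℕ)) ∧ ∀ i, 0 < (f i : ℕ)))
      (fun f => ∀ i, p ^ (α - 1) ∣ (f i : ℕ))
      (fun f => ∏ i, (1 : ℚ) / ((f i : ℕ) : ℚ) ^ (n i))
    have hbij := aux_bij hp.pos hα n
    have hA : ((p ^ α : ℕ) : ℚ) ^ (∑ i, n i) *
        ∑ g ∈ Finset.univ.filter
          (fun g : Fin d → Fin p =>
            (StrictMono fun i => (g i : ℕ)) ∧ ∀ i, 0 < (g i : ℕ)),
          ∏ i, (1 : ℚ) / (((p ^ (α - 1) * (g i : ℕ) : ℕ)) : ℚ) ^ (n i) = har p n := by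
      rw [har, mhs, Finset.mul_sum, Finset.mul_sum]
      refine Finset.sum_congr rfl fun g hg => ?_
      simp only [Finset.mem_filter, Finset.mem_univ, true_and] at hg
      have hg0 : ∀ i, ((g i : ℕ) : ℚ) ≠ 0 := fun i => by exact_mod_cast (hg.2 i).ne'
      push_cast
      rw [hps]
      simp only [one_div, mul_pow, mul_inv, Finset.prod_mul_distrib,
        ← Finset.prod_inv_distrib, Finset.prod_pow_eq_pow_sum]
      have h0 : (((p : ℚ) ^ (α - 1)) ^ (∑ i, n i)) ≠ 0 := by positivity
      field_simp
      rw [Finset.prod_div_distrib, Finset.prod_const_one, Finset.prod_pow_eq_pow_sum,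
        mul_one_div_cancel h0, one_mul]
    rw [har, mhs, ← hsplit, hbij, mul_add, hA, add_sub_cancel_left, Finset.mul_sum]
    refine Finset.sum_congr rfl fun f _ => ?_
    rw [pow_mul]
    push_cast
    ring
  have hc : ((har (p ^ α) n : ℚ) : ℚ_[p]) - ((har p n : ℚ) : ℚ_[p])
      = (((har (p ^ α) n - har p n : ℚ)) : ℚ_[p]) := by push_cast; ring
  rw [hc, Padic.eq_padicNorm]
  have hb : padicNorm p (har (p ^ α) n - har p n) ≤ (p : ℚ) ^ (-((∑ i, n i : ℤ) + 1)) := by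
    rw [key]
    refine padicNorm.sum_le' (fun f hf => ?_) (zpow_nonneg (by positivity) _)
    simp only [Finset.mem_filter, Finset.mem_univ, true_and] at hf
    obtain ⟨⟨hsm, hpos⟩, hnd⟩ := hf
    push_neg at hnd
    obtain ⟨j, hj⟩ := hnd
    exact aux_term p α hα n hn f hpos j hj
  calc ((padicNorm p (har (p ^ α) n - har p n) : ℚ) : ℝ)
      ≤ (((p : ℚ) ^ (-((∑ i, n i : ℤ) + 1)) : ℚ) : ℝ) := by exact_mod_cast hb
    _ = (p : ℝ) ^ (-((∑ i, n i : ℤ) + 1)) := by push_cast; ring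
end

section
/- Euler's identity ζ(2,1) = ζ(3) holds: Σ_{0<m_1<m_2} 1/(m_1 m_2^2) = Σ_{0<m} 1/m^3. -/
open Filter Topology ENNReal Finset

/-- The Riemann zeta value `ζ(n) = ∑_{m ≥ 1} 1/m^n` as a real series. -/
noncomputable def zetaVal (n : ℕ) : ℝ := ∑' m : ℕ+, (1 : ℝ) / (m : ℝ) ^ n

/-- The double zeta value `ζ(n₂,n₁) = ∑_{0<m_1<m_2} 1/(m_1^{n_1} m_2^{n_2})`. -/
noncomputable def zetaVal2 (n₂ n₁ : ℕ) : ℝ :=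
  ∑' q : {q : ℕ+ × ℕ+ // q.1 < q.2}, (1 : ℝ) / ((q.1.1 : ℝ) ^ n₁ * (q.1.2 : ℝ) ^ n₂)

namespace EulerZeta

/-- partial harmonic sum -/
noncomputable def Hn (j : ℕ+) : ℝ := ∑ i ∈ Finset.range (j:ℕ), 1/((i:ℝ)+1)

lemma pnat_cast_pos (m : ℕ+) : (0:ℝ) < (m:ℝ) := by exact_mod_cast m.pos

lemma tele_nat (j : ℕ+) :
    HasSum (fun n : ℕ => 1 / (((n:ℝ)+1) * (((n:ℝ)+1) + (j:ℝ))))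
      ((∑ i ∈ Finset.range (j:ℕ), 1/((i:ℝ)+1)) / (j:ℝ)) := by
  have hj : (0:ℝ) < (j:ℝ) := pnat_cast_pos j
  set g : ℕ → ℝ := fun n => 1/((n:ℝ)+1) with hg
  have hpos : ∀ n : ℕ, 0 ≤ 1 / (((n:ℝ)+1) * (((n:ℝ)+1) + (j:ℝ))) := by
    intro n; positivity
  rw [hasSum_iff_tendsto_nat_of_nonneg hpos]
  have hps : ∀ N : ℕ, ∑ n ∈ Finset.range N, 1 / (((n:ℝ)+1) * (((n:ℝ)+1) + (j:ℝ)))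
      = ((∑ i ∈ Finset.range (j:ℕ), g i) - ∑ i ∈ Finset.range (j:ℕ), g (N+i)) / (j:ℝ) := by
    intro N
    have key : ∀ n : ℕ, 1 / (((n:ℝ)+1) * (((n:ℝ)+1) + (j:ℝ))) = (g n - g (n + (j:ℕ))) / (j:ℝ) := by
      intro n
      have : ((n + (j:ℕ) : ℕ) : ℝ) = (n:ℝ) + (j:ℝ) := by push_cast; ring
      simp only [hg, this]
      rw [div_sub_div _ _ (by positivity) (by positivity), div_div,
        div_eq_div_iff (by positivity) (by positivity)]
      ring
    simp_rw [key, ← Finset.sum_div, Finset.sum_sub_distrib]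
    congr 1
    have h1 : ∑ i ∈ Finset.range ((j:ℕ) + N), g i
        = (∑ i ∈ Finset.range (j:ℕ), g i) + ∑ n ∈ Finset.range N, g ((j:ℕ) + n) :=
      Finset.sum_range_add g (j:ℕ) N
    have h2 : ∑ i ∈ Finset.range (N + (j:ℕ)), g i
        = (∑ i ∈ Finset.range N, g i) + ∑ i ∈ Finset.range (j:ℕ), g (N + i) :=
      Finset.sum_range_add g N (j:ℕ)
    rw [Nat.add_comm (j:ℕ) N, h2] at h1
    have h3 : ∑ n ∈ Finset.range N, g (n + (j:ℕ)) = ∑ n ∈ Finset.range N, g ((j:ℕ) + n) := by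
      apply Finset.sum_congr rfl; intros; rw [Nat.add_comm]
    linarith [h1, h3]
  simp_rw [hps]
  have htail : Tendsto (fun N : ℕ => ∑ i ∈ Finset.range (j:ℕ), g (N+i)) atTop (𝓝 0) := by
    have := tendsto_finset_sum (Finset.range (j:ℕ))
      (f := fun (i : ℕ) (N : ℕ) => g (N + i)) (a := fun _ => (0:ℝ)) (x := atTop) ?_
    · simpa using this
    · intro i _
      have h1 : Tendsto (fun N : ℕ => ((N:ℝ) + ((i:ℝ)+1))) atTop atTop :=
        tendsto_atTop_add_const_right _ _ tendsto_natCast_atTop_atTop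
      have h2 : (fun N : ℕ => g (N + i)) = fun N : ℕ => (((N:ℝ) + ((i:ℝ)+1)))⁻¹ := by
        funext N; simp only [hg]; push_cast; rw [one_div]; ring_nf
      show Tendsto (fun N : ℕ => g (N + i)) atTop (𝓝 0)
      rw [h2]; exact h1.inv_tendsto_atTop
  have := ((tendsto_const_nhds (x := ∑ i ∈ Finset.range (j:ℕ), g i)).sub htail).div_const (j:ℝ)
  simpa using this

lemma inner_hasSum (j : ℕ+) :
    HasSum (fun k : ℕ+ => 1/((j:ℝ)*(k:ℝ)*((j:ℝ)+(k:ℝ)))) (Hn j / (j:ℝ)^2) := by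
  have hj : (0:ℝ) < (j:ℝ) := pnat_cast_pos j
  have h1 := (tele_nat j).mul_left (1/(j:ℝ))
  rw [← (Equiv.pnatEquivNat.symm).hasSum_iff]
  have heq : (fun k : ℕ+ => 1/((j:ℝ)*(k:ℝ)*((j:ℝ)+(k:ℝ)))) ∘ (Equiv.pnatEquivNat.symm)
      = fun n : ℕ => 1/(j:ℝ) * (1 / (((n:ℝ)+1) * (((n:ℝ)+1) + (j:ℝ)))) := by
    funext n
    have hcast : ((Equiv.pnatEquivNat.symm n : ℕ+) : ℝ) = (n:ℝ) + 1 := by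
      show ((n.succPNat : ℕ+) : ℝ) = (n:ℝ) + 1
      rw [show ((n.succPNat : ℕ+) : ℝ) = ((n.succPNat : ℕ) : ℝ) from rfl, Nat.succPNat_coe]
      push_cast; ring
    simp only [Function.comp_apply, hcast]
    have hn1 : ((n:ℝ)+1) ≠ 0 := by positivity
    field_simp
    ring
  rw [heq]
  have hval : Hn j / (j:ℝ)^2 = 1/(j:ℝ) * ((∑ i ∈ Finset.range (j:ℕ), 1/((i:ℝ)+1)) / (j:ℝ)) := by
    rw [Hn, pow_two]; ring
  rw [hval]
  exact h1

lemma term_nonneg (j k : ℕ+) : 0 ≤ 1/((j:ℝ)*(k:ℝ)*((j:ℝ)+(k:ℝ))) := by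
  have := pnat_cast_pos j; have := pnat_cast_pos k; positivity

lemma inner_tsum (j : ℕ+) :
    ∑' k : ℕ+, ENNReal.ofReal (1/((j:ℝ)*(k:ℝ)*((j:ℝ)+(k:ℝ)))) = ENNReal.ofReal (Hn j/(j:ℝ)^2) := by
  rw [← ENNReal.ofReal_tsum_of_nonneg (term_nonneg j) (inner_hasSum j).summable,
    (inner_hasSum j).tsum_eq]

lemma step3 (j : ℕ+) :
    ENNReal.ofReal (Hn j/(j:ℝ)^2)
      = ∑' m : ℕ+, (if m ≤ j then ENNReal.ofReal (1/((m:ℝ)*(j:ℝ)^2)) else 0) := by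
  have hj : (0:ℝ) < (j:ℝ) := pnat_cast_pos j
  rw [← Equiv.tsum_eq (Equiv.pnatEquivNat.symm)
    (fun m : ℕ+ => if m ≤ j then ENNReal.ofReal (1/((m:ℝ)*(j:ℝ)^2)) else 0)]
  have hcast : ∀ n : ℕ, ((Equiv.pnatEquivNat.symm n : ℕ+) : ℝ) = (n:ℝ) + 1 := by
    intro n
    rw [show ((Equiv.pnatEquivNat.symm n : ℕ+) : ℝ) = ((n.succPNat : ℕ) : ℝ) from rfl,
      Nat.succPNat_coe]; push_cast; ring
  have hle : ∀ n : ℕ, ((Equiv.pnatEquivNat.symm n : ℕ+) ≤ j) ↔ n + 1 ≤ (j:ℕ) := by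
    intro n
    rw [show (Equiv.pnatEquivNat.symm n : ℕ+) = n.succPNat from rfl, ← PNat.coe_le_coe,
      Nat.succPNat_coe]
  rw [tsum_eq_sum (s := Finset.range (j:ℕ)) ?_]
  · have : ∀ n ∈ Finset.range (j:ℕ),
        (if (Equiv.pnatEquivNat.symm n : ℕ+) ≤ j then
          ENNReal.ofReal (1/(((Equiv.pnatEquivNat.symm n : ℕ+):ℝ)*(j:ℝ)^2)) else 0)
        = ENNReal.ofReal (1/(((n:ℝ)+1)*(j:ℝ)^2)) := by
      intro n hn
      rw [Finset.mem_range] at hn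
      rw [if_pos ((hle n).mpr hn), hcast n]
    rw [Finset.sum_congr rfl this, ← ENNReal.ofReal_sum_of_nonneg]
    · congr 1
      rw [Hn, Finset.sum_div]
      apply Finset.sum_congr rfl
      intro i _
      rw [div_div]
    · intro i _; positivity
  · intro n hn
    rw [Finset.mem_range, Nat.not_lt] at hn
    rw [if_neg]
    rw [hle n]
    omega

def E : ℕ+ × ℕ+ ≃ {q : ℕ+ × ℕ+ // q.1 < q.2} where
  toFun p := ⟨(p.1, p.1 + p.2), PNat.lt_add_right p.1 p.2⟩
  invFun q := (q.1.1, ⟨(q.1.2 : ℕ) - (q.1.1 : ℕ), by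
    have : ((q.1.1:ℕ)) < (q.1.2:ℕ) := (PNat.coe_lt_coe _ _).mpr q.2
    omega⟩)
  left_inv p := by
    ext
    · rfl
    · simp [← PNat.coe_inj]
      rfl
  right_inv q := by
    have h : ((q.1.1:ℕ)) < (q.1.2:ℕ) := (PNat.coe_lt_coe _ _).mpr q.2
    ext
    · rfl
    · show (((q.1.1 + ⟨(q.1.2:ℕ) - (q.1.1:ℕ), _⟩ : ℕ+)):ℕ+) = q.1.2
      apply PNat.eq
      show (q.1.1:ℕ) + ((q.1.2:ℕ) - (q.1.1:ℕ)) = q.1.2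
      omega

lemma A_eq_G :
    (∑' q : {q : ℕ+ × ℕ+ // q.1 < q.2}, ENNReal.ofReal (1/((q.1.1:ℝ) * (q.1.2:ℝ)^2)))
      = ∑' p : ℕ+ × ℕ+, ENNReal.ofReal (1/((p.1:ℝ) * ((p.1:ℝ)+(p.2:ℝ))^2)) := by
  rw [← Equiv.tsum_eq E (fun q : {q : ℕ+ × ℕ+ // q.1 < q.2} =>
    ENNReal.ofReal (1/((q.1.1:ℝ) * (q.1.2:ℝ)^2)))]
  apply tsum_congr
  intro p
  have h2 : (((p.1 + p.2 : ℕ+)) : ℝ) = (p.1:ℝ) + (p.2:ℝ) := by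
    rw [show (((p.1 + p.2 : ℕ+)) : ℝ) = (((p.1 + p.2 : ℕ+) : ℕ) : ℝ) from rfl, PNat.add_coe]
    push_cast; rfl
  show ENNReal.ofReal (1/(((E p).1.1:ℝ) * (((E p).1.2):ℝ)^2)) = _
  rw [show ((E p).1.2 : ℝ) = (((p.1 + p.2 : ℕ+)) : ℝ) from rfl, h2]
  rfl

lemma sqrt_summable : Summable (fun m : ℕ+ => 1/((m:ℝ) * Real.sqrt (m:ℝ))) := by
  have h : Summable (fun n : ℕ => 1/(n:ℝ)^(3/2 : ℝ)) :=
    Real.summable_one_div_nat_rpow.mpr (by norm_num)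
  have hinj : Function.Injective (fun m : ℕ+ => (m:ℕ)) := fun a b hab => by
    exact PNat.coe_injective hab
  have h2 := h.comp_injective hinj
  apply h2.congr
  intro m
  have hm : (0:ℝ) < (m:ℝ) := pnat_cast_pos m
  show 1/((m:ℝ))^(3/2:ℝ) = 1/((m:ℝ) * Real.sqrt (m:ℝ))
  rw [show (3/2:ℝ) = 1 + 1/2 by norm_num, Real.rpow_add hm, Real.rpow_one,
    ← Real.sqrt_eq_rpow]

lemma A_lt_top :
    (∑' q : {q : ℕ+ × ℕ+ // q.1 < q.2}, ENNReal.ofReal (1/((q.1.1:ℝ) * (q.1.2:ℝ)^2))) < ⊤ := by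
  set a : ℕ+ → ℝ := fun m => 1/((m:ℝ) * Real.sqrt (m:ℝ)) with ha
  have hanneg : ∀ m : ℕ+, 0 ≤ a m := by
    intro m; have := pnat_cast_pos m; rw [ha]; positivity
  have hbound : ∀ q : {q : ℕ+ × ℕ+ // q.1 < q.2},
      ENNReal.ofReal (1/((q.1.1:ℝ)*(q.1.2:ℝ)^2)) ≤ ENNReal.ofReal (a q.1.1 * a q.1.2) := by
    rintro ⟨⟨m, n⟩, hlt⟩
    apply ENNReal.ofReal_le_ofReal
    have hm : (0:ℝ) < (m:ℝ) := pnat_cast_pos m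
    have hn : (0:ℝ) < (n:ℝ) := pnat_cast_pos n
    have hmn : (m:ℝ) ≤ (n:ℝ) := by
      have : (m:ℕ) ≤ (n:ℕ) := le_of_lt hlt
      exact_mod_cast this
    have hs : Real.sqrt (m:ℝ) ≤ Real.sqrt (n:ℝ) := Real.sqrt_le_sqrt hmn
    have h1 : Real.sqrt (n:ℝ) * Real.sqrt (n:ℝ) = (n:ℝ) := Real.mul_self_sqrt hn.le
    have hsm : 0 < Real.sqrt (m:ℝ) := Real.sqrt_pos.mpr hm
    have hsn : 0 < Real.sqrt (n:ℝ) := Real.sqrt_pos.mpr hn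
    show (1:ℝ)/((m:ℝ)*(n:ℝ)^2) ≤ 1/((m:ℝ) * Real.sqrt (m:ℝ)) * (1/((n:ℝ) * Real.sqrt (n:ℝ)))
    rw [div_mul_div_comm, one_mul]
    apply one_div_le_one_div_of_le
    · positivity
    · have k1 : Real.sqrt (m:ℝ) * Real.sqrt (n:ℝ) ≤ (n:ℝ) := by
        nlinarith [mul_le_mul_of_nonneg_right hs hsn.le, h1]
      have k2 : (m:ℝ)*Real.sqrt (m:ℝ)*((n:ℝ)*Real.sqrt (n:ℝ))
          = (m:ℝ)*(n:ℝ)*(Real.sqrt (m:ℝ)*Real.sqrt (n:ℝ)) := by ring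
      rw [k2]
      calc (m:ℝ)*(n:ℝ)*(Real.sqrt (m:ℝ)*Real.sqrt (n:ℝ)) ≤ (m:ℝ)*(n:ℝ)*(n:ℝ) :=
            mul_le_mul_of_nonneg_left k1 (by positivity)
        _ = (m:ℝ)*(n:ℝ)^2 := by ring
  calc (∑' q : {q : ℕ+ × ℕ+ // q.1 < q.2}, ENNReal.ofReal (1/((q.1.1:ℝ) * (q.1.2:ℝ)^2)))
      ≤ ∑' q : {q : ℕ+ × ℕ+ // q.1 < q.2}, ENNReal.ofReal (a q.1.1 * a q.1.2) :=
        ENNReal.tsum_le_tsum hbound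
    _ ≤ ∑' p : ℕ+ × ℕ+, ENNReal.ofReal (a p.1 * a p.2) := by
        have hind := _root_.tsum_subtype {q : ℕ+ × ℕ+ | q.1 < q.2}
          (fun p : ℕ+ × ℕ+ => ENNReal.ofReal (a p.1 * a p.2))
        calc (∑' q : {q : ℕ+ × ℕ+ // q.1 < q.2}, ENNReal.ofReal (a q.1.1 * a q.1.2))
            = ∑' p : ℕ+ × ℕ+, Set.indicator {q : ℕ+ × ℕ+ | q.1 < q.2}
                (fun p : ℕ+ × ℕ+ => ENNReal.ofReal (a p.1 * a p.2)) p := hind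
          _ ≤ ∑' p : ℕ+ × ℕ+, ENNReal.ofReal (a p.1 * a p.2) :=
              ENNReal.tsum_le_tsum (fun p => Set.indicator_le_self _ _ p)
    _ = (∑' m : ℕ+, ENNReal.ofReal (a m)) * (∑' m : ℕ+, ENNReal.ofReal (a m)) := by
        rw [ENNReal.tsum_prod']
        have : ∀ m k : ℕ+, ENNReal.ofReal (a m * a k)
            = ENNReal.ofReal (a m) * ENNReal.ofReal (a k) := by
          intro m k; rw [ENNReal.ofReal_mul (hanneg m)]
        simp_rw [this, ENNReal.tsum_mul_left, ENNReal.tsum_mul_right]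
    _ < ⊤ := by
        have : ∑' m : ℕ+, ENNReal.ofReal (a m) = ENNReal.ofReal (∑' m : ℕ+, a m) :=
          (ENNReal.ofReal_tsum_of_nonneg hanneg sqrt_summable).symm
        rw [this]
        exact ENNReal.mul_lt_top ENNReal.ofReal_lt_top ENNReal.ofReal_lt_top

theorem euler_key :
    (∑' q : {q : ℕ+ × ℕ+ // q.1 < q.2}, ENNReal.ofReal (1/((q.1.1:ℝ) * (q.1.2:ℝ)^2)))
      = ∑' m : ℕ+, ENNReal.ofReal (1/(m:ℝ)^3) := by
  classical
  set A := ∑' q : {q : ℕ+ × ℕ+ // q.1 < q.2}, ENNReal.ofReal (1/((q.1.1:ℝ) * (q.1.2:ℝ)^2)) with hA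
  set Z := ∑' m : ℕ+, ENNReal.ofReal (1/(m:ℝ)^3) with hZ
  set T := ∑' p : ℕ+ × ℕ+, ENNReal.ofReal (1/((p.1:ℝ)*(p.2:ℝ)*((p.1:ℝ)+(p.2:ℝ)))) with hT
  have hT2 : T = A + A := by
    have hsplit : ∀ p : ℕ+ × ℕ+,
        ENNReal.ofReal (1/((p.1:ℝ)*(p.2:ℝ)*((p.1:ℝ)+(p.2:ℝ))))
          = ENNReal.ofReal (1/((p.1:ℝ) * ((p.1:ℝ)+(p.2:ℝ))^2))
            + ENNReal.ofReal (1/((p.2:ℝ) * ((p.2:ℝ)+(p.1:ℝ))^2)) := by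
      rintro ⟨j, k⟩
      have hj : (0:ℝ) < (j:ℝ) := pnat_cast_pos j
      have hk : (0:ℝ) < (k:ℝ) := pnat_cast_pos k
      rw [← ENNReal.ofReal_add (by positivity) (by positivity)]
      congr 1
      rw [div_add_div _ _ (by positivity) (by positivity), div_eq_div_iff (by positivity) (by positivity)]
      ring
    rw [hT]
    simp_rw [hsplit]
    rw [ENNReal.tsum_add]
    congr 1
    · rw [hA, A_eq_G]
    · rw [hA, A_eq_G]
      rw [← Equiv.tsum_eq (Equiv.prodComm ℕ+ ℕ+)
        (fun p : ℕ+ × ℕ+ => ENNReal.ofReal (1/((p.2:ℝ) * ((p.2:ℝ)+(p.1:ℝ))^2)))]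
      rfl
  have hT3 : T = A + Z := by
    have step1 : T = ∑' j : ℕ+, ∑' m : ℕ+,
        (if m ≤ j then ENNReal.ofReal (1/((m:ℝ)*(j:ℝ)^2)) else 0) := by
      rw [hT, ENNReal.tsum_prod']
      apply tsum_congr
      intro j
      rw [inner_tsum j, step3 j]
    have step2 : T = ∑' p : ℕ+ × ℕ+,
        (if p.1 ≤ p.2 then ENNReal.ofReal (1/((p.1:ℝ)*(p.2:ℝ)^2)) else 0) := by
      rw [step1, ENNReal.tsum_comm, ENNReal.tsum_prod']
    have hdiag : ∀ p : ℕ+ × ℕ+,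
        (if p.1 ≤ p.2 then ENNReal.ofReal (1/((p.1:ℝ)*(p.2:ℝ)^2)) else 0)
          = (if p.1 < p.2 then ENNReal.ofReal (1/((p.1:ℝ)*(p.2:ℝ)^2)) else 0)
            + (if p.1 = p.2 then ENNReal.ofReal (1/((p.1:ℝ)*(p.2:ℝ)^2)) else 0) := by
      rintro ⟨m, n⟩
      rcases lt_trichotomy m n with h | h | h
      · rw [if_pos h.le, if_pos h, if_neg h.ne, add_zero]
      · rw [if_pos h.le, if_neg (by simp [h]), if_pos h, zero_add]
      · rw [if_neg (by exact not_le.mpr h), if_neg (by exact not_lt.mpr h.le),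
          if_neg (by exact fun he => absurd he.symm (ne_of_lt h)), add_zero]
    have hstrict : (∑' p : ℕ+ × ℕ+,
        (if p.1 < p.2 then ENNReal.ofReal (1/((p.1:ℝ)*(p.2:ℝ)^2)) else 0)) = A := by
      have hind := tsum_subtype {q : ℕ+ × ℕ+ | q.1 < q.2}
        (fun p : ℕ+ × ℕ+ => ENNReal.ofReal (1/((p.1:ℝ)*(p.2:ℝ)^2)))
      have hcongr : (∑' p : ℕ+ × ℕ+,
          (if p.1 < p.2 then ENNReal.ofReal (1/((p.1:ℝ)*(p.2:ℝ)^2)) else 0))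
          = ∑' p : ℕ+ × ℕ+, Set.indicator {q : ℕ+ × ℕ+ | q.1 < q.2}
              (fun p : ℕ+ × ℕ+ => ENNReal.ofReal (1/((p.1:ℝ)*(p.2:ℝ)^2))) p := by
        apply tsum_congr
        intro p
        rw [Set.indicator_apply]
        rfl
      rw [hA, hcongr]
      exact hind.symm
    have hdiagsum : (∑' p : ℕ+ × ℕ+,
        (if p.1 = p.2 then ENNReal.ofReal (1/((p.1:ℝ)*(p.2:ℝ)^2)) else 0)) = Z := by
      rw [ENNReal.tsum_prod', hZ]
      apply tsum_congr
      intro m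
      rw [tsum_eq_single m (by intro j hj; rw [if_neg (fun h => hj h.symm)])]
      rw [if_pos rfl]
      congr 1
      ring
    rw [step2]
    simp_rw [hdiag]
    rw [ENNReal.tsum_add, hstrict, hdiagsum]
  exact (ENNReal.add_right_inj A_lt_top.ne).mp (hT2.symm.trans hT3)

end EulerZeta

/-- Euler's identity `ζ(2,1) = ζ(3)`. -/
theorem euler_zeta_two_one : zetaVal2 2 1 = zetaVal 3 := by
  have h21 : zetaVal2 2 1 =
      (∑' q : {q : ℕ+ × ℕ+ // q.1 < q.2},
        ENNReal.ofReal (1/((q.1.1:ℝ) * (q.1.2:ℝ)^2))).toReal := by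
    rw [ENNReal.tsum_toReal_eq (fun _ => ENNReal.ofReal_ne_top)]
    rw [zetaVal2]
    apply tsum_congr
    intro q
    have h1 := EulerZeta.pnat_cast_pos q.1.1
    have h2 := EulerZeta.pnat_cast_pos q.1.2
    rw [ENNReal.toReal_ofReal (by positivity), pow_one]
  have h3 : zetaVal 3 = (∑' m : ℕ+, ENNReal.ofReal (1/(m:ℝ)^3)).toReal := by
    rw [ENNReal.tsum_toReal_eq (fun _ => ENNReal.ofReal_ne_top)]
    rw [zetaVal]
    apply tsum_congr
    intro m
    have := EulerZeta.pnat_cast_pos m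
    rw [ENNReal.toReal_ofReal (by positivity)]
  rw [h21, h3, EulerZeta.euler_key]
end

section
/- Let K be a field (or commutative ring) and let G be the set of f ∈ K⟨⟨e_0,e_1⟩⟩ with constant coefficient f[∅] = 1. Define the Ihara (twisted Magnus) product g ∘ f = g(e_0,e_1) · f(e_0, g^{-1} e_1 g), where f(e_0, h) denotes the continuous K-algebra substitution e_0 ↦ e_0, e_1 ↦ h applied to f, and g^{-1} is the multiplicative inverse of g. Then (G, ∘) is a group: ∘ is associative, has unit the constant series 1, and every element has a two-sided inverse. -/
open Finset

abbrev Word := List (Fin 2)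

variable {K : Type*} [Field K]

/-- Multiplication via deconcatenation: `(f·g)[w] = ∑_{w = uv} f[u]·g[v]`. -/
def seriesMul (f g : Word → K) : Word → K :=
  fun w => ∑ k ∈ Finset.range (w.length + 1), f (w.take k) * g (w.drop k)

/-- The unit series `1`. -/
def seriesOne : Word → K := fun w => if w = [] then 1 else 0

/-- The series `e₁`. -/
def e1Series : Word → K := fun w => if w = [1] then 1 else 0

/-- The multiplicative inverse of a series with constant coefficient `1`. -/
def seriesInv (f : Word → K) : Word → K
  | [] => 1
  | x :: w => -∑ k ∈ Finset.range (w.length + 1), f (x :: w.take k) * seriesInv f (w.drop k)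
  termination_by w => w.length
  decreasing_by simp [List.length_drop] <;> omega

/-- Coefficient of the word `w` in the image of the monomial `u` under the continuous
algebra substitution `e₀ ↦ e₀`, `e₁ ↦ h`. -/
def substCoeff (h : Word → K) : Word → Word → K
  | [], w => if w = [] then 1 else 0
  | a :: u, w =>
    if a = 0 then
      match w with
      | [] => 0
      | b :: w' => if b = 0 then substCoeff h u w' else 0
    else
      ∑ k ∈ Finset.range (w.length + 1), h (w.take k) * substCoeff h u (w.drop k)

/-- The substitution `f(e₀, h)`: substitute `e₀ ↦ e₀`, `e₁ ↦ h` in `f`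
(for `h` with zero constant coefficient). -/
def subst (f h : Word → K) : Word → K :=
  fun w => ∑ k ∈ Finset.range (w.length + 1),
    ∑ u : Fin k → Fin 2, f (List.ofFn u) * substCoeff h (List.ofFn u) w

/-- `Ad_g(e₁) = g⁻¹ e₁ g`. -/
def adE1 (g : Word → K) : Word → K :=
  seriesMul (seriesMul (seriesInv g) e1Series) g

/-- The Ihara (twisted Magnus) product `g ∘ f = g · f(e₀, g⁻¹ e₁ g)`. -/
def ihara (g f : Word → K) : Word → K :=
  seriesMul g (subst f (adE1 g))

section Lemmas
variable {K : Type*} [Field K]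

lemma seriesMul_nil (f g : Word → K) : seriesMul f g [] = f [] * g [] := by
  simp [seriesMul]

lemma seriesMul_cons (f g : Word → K) (x : Fin 2) (w : Word) :
    seriesMul f g (x :: w) = f [] * g (x :: w) + seriesMul (fun u => f (x :: u)) g w := by
  unfold seriesMul
  rw [show (x :: w).length + 1 = w.length + 1 + 1 from rfl, Finset.sum_range_succ']
  simp [add_comm]

lemma seriesOne_mul (f : Word → K) : seriesMul seriesOne f = f := by
  funext w
  unfold seriesMul
  rw [Finset.sum_eq_single_of_mem 0 (by simp)]
  · simp [seriesOne]
  · intro k hk hk0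
    rw [Finset.mem_range] at hk
    have : (w.take k) ≠ [] := by
      intro h
      rcases List.take_eq_nil_iff.mp h with h | h
      · exact hk0 h
      · subst h; simp at hk; omega
    simp [seriesOne, this]

lemma seriesMul_one (f : Word → K) : seriesMul f seriesOne = f := by
  funext w
  unfold seriesMul
  rw [Finset.sum_eq_single_of_mem w.length (by simp)]
  · simp [seriesOne]
  · intro k hk hk0
    rw [Finset.mem_range] at hk
    have : (w.drop k) ≠ [] := by
      intro h
      apply_fun List.length at h
      simp at h
      omega
    simp [seriesOne, this]

lemma seriesMul_addsmul (c : K) (A B g : Word → K) (w : Word) :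
    seriesMul (fun u => c * A u + B u) g w = c * seriesMul A g w + seriesMul B g w := by
  unfold seriesMul
  rw [Finset.mul_sum, ← Finset.sum_add_distrib]
  congr 1; funext k; ring

lemma seriesMul_assoc (f g h : Word → K) :
    seriesMul (seriesMul f g) h = seriesMul f (seriesMul g h) := by
  funext w
  induction w generalizing f g h with
  | nil => simp [seriesMul_nil, mul_assoc]
  | cons x w ih =>
    rw [seriesMul_cons, seriesMul_cons, seriesMul_cons, seriesMul_nil]
    have hL : (fun u => seriesMul f g (x :: u)) =
        fun u => f [] * (fun v => g (x :: v)) u + seriesMul (fun v => f (x :: v)) g u := by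
      funext u; rw [seriesMul_cons]
    rw [hL, seriesMul_addsmul, ih]
    ring

end Lemmas
section Lemmas2
variable {K : Type*} [Field K]

lemma seriesInv_nil (f : Word → K) : seriesInv f [] = 1 := by
  simp [seriesInv]

lemma seriesMul_inv (f : Word → K) (hf : f [] = 1) :
    seriesMul f (seriesInv f) = seriesOne := by
  funext w
  cases w with
  | nil => simp [seriesMul_nil, seriesInv_nil, seriesOne, hf]
  | cons x w =>
    rw [seriesMul_cons, hf, one_mul]
    have h2 : seriesMul (fun u => f (x :: u)) (seriesInv f) w =
        -(seriesInv f (x :: w)) := by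
      rw [show seriesInv f (x :: w) =
        -∑ k ∈ Finset.range (w.length + 1), f (x :: w.take k) * seriesInv f (w.drop k)
        from by rw [seriesInv]]
      rw [neg_neg]
      rfl
    rw [h2]
    simp [seriesOne]

lemma inv_unique' (a b c : Word → K) (h1 : seriesMul a b = seriesOne)
    (h2 : seriesMul c a = seriesOne) : b = c := by
  have : seriesMul c (seriesMul a b) = b := by
    rw [← seriesMul_assoc, h2, seriesOne_mul]
  rw [h1, seriesMul_one] at this
  exact this.symm

lemma seriesInv_mul (f : Word → K) (hf : f [] = 1) :
    seriesMul (seriesInv f) f = seriesOne := by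
  have h1 : seriesMul (seriesInv f) (seriesInv (seriesInv f)) = seriesOne :=
    seriesMul_inv _ (seriesInv_nil f)
  have h2 : seriesInv (seriesInv f) = f :=
    inv_unique' (seriesInv f) (seriesInv (seriesInv f)) f h1 (seriesMul_inv f hf)
  nth_rewrite 2 [← h2]
  exact h1

lemma seriesInv_one : seriesInv (seriesOne : Word → K) = seriesOne :=
  inv_unique' seriesOne (seriesInv seriesOne) seriesOne
    (seriesMul_inv _ (by simp [seriesOne])) (seriesOne_mul _)

lemma seriesInv_mul_rev (a b : Word → K) (ha : a [] = 1) (hb : b [] = 1) :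
    seriesInv (seriesMul a b) = seriesMul (seriesInv b) (seriesInv a) := by
  have hab : seriesMul a b [] = 1 := by rw [seriesMul_nil, ha, hb, one_mul]
  refine (inv_unique' (seriesMul a b) (seriesMul (seriesInv b) (seriesInv a))
    (seriesInv (seriesMul a b)) ?_ (seriesInv_mul _ hab)).symm
  -- (a*b) * (invb * inva) = 1
  rw [seriesMul_assoc, ← seriesMul_assoc b (seriesInv b) (seriesInv a),
    seriesMul_inv b hb, seriesOne_mul, seriesMul_inv a ha]

end Lemmas2
section Lemmas3
variable {K : Type*} [Field K]

/-- The series `e₀`. -/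
def e0Series : Word → K := fun w => if w = [0] then 1 else 0

lemma substCoeff_nil (h : Word → K) : substCoeff h [] = (seriesOne : Word → K) := rfl

lemma e0Series_mul_nil (F : Word → K) : seriesMul e0Series F [] = 0 := by
  simp [seriesMul, e0Series]

lemma e0Series_mul_cons (F : Word → K) (b : Fin 2) (w : Word) :
    seriesMul e0Series F (b :: w) = if b = 0 then F w else 0 := by
  unfold seriesMul
  rw [Finset.sum_eq_single_of_mem 1 (by simp)]
  · rcases (by omega : b = 0 ∨ b = 1) with rfl | rfl <;> simp [e0Series]
  · intro k hk hk1
    rw [Finset.mem_range] at hk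
    have hne : (List.take k (b :: w)) ≠ [0] := by
      intro hh
      have := congrArg List.length hh
      rw [List.length_take] at this
      simp at this hk
      omega
    simp [e0Series, hne]

lemma substCoeff_cons0 (h : Word → K) (u : Word) :
    substCoeff h (0 :: u) = seriesMul e0Series (substCoeff h u) := by
  funext w
  cases w with
  | nil => rw [e0Series_mul_nil]; rfl
  | cons b w => rw [e0Series_mul_cons]; rfl

lemma substCoeff_cons1 (h : Word → K) (u : Word) :
    substCoeff h (1 :: u) = seriesMul h (substCoeff h u) := by
  funext w
  show (if (1 : Fin 2) = 0 then _ else _) = _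
  rw [if_neg (by decide)]
  rfl

lemma substCoeff_cons (h : Word → K) (a : Fin 2) (u : Word) :
    substCoeff h (a :: u) =
      seriesMul (if a = 0 then e0Series else h) (substCoeff h u) := by
  rcases (by omega : a = 0 ∨ a = 1) with rfl | rfl
  · rw [substCoeff_cons0]; simp
  · rw [substCoeff_cons1]; norm_num

lemma substCoeff_append (h : Word → K) (u v : Word) :
    substCoeff h (u ++ v) = seriesMul (substCoeff h u) (substCoeff h v) := by
  induction u with
  | nil => rw [substCoeff_nil, seriesOne_mul]; rfl
  | cons a u ih =>
    rw [List.cons_append, substCoeff_cons, substCoeff_cons, ih, seriesMul_assoc]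

lemma substCoeff_low (h : Word → K) (h0 : h [] = 0) :
    ∀ u w : Word, w.length < u.length → substCoeff h u w = 0 := by
  intro u
  induction u with
  | nil => intro w hw; simp at hw
  | cons a u ih =>
    intro w hw
    rcases (by omega : a = 0 ∨ a = 1) with rfl | rfl
    · rw [substCoeff_cons0]
      cases w with
      | nil => exact e0Series_mul_nil _
      | cons b w' =>
        rw [e0Series_mul_cons]
        simp at hw
        by_cases hb : b = 0
        · rw [if_pos hb, ih w' (by omega)]
        · rw [if_neg hb]
    · rw [substCoeff_cons1]
      unfold seriesMul
      apply Finset.sum_eq_zero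
      intro k hk
      rw [Finset.mem_range] at hk
      by_cases hk0 : k = 0
      · subst hk0; simp [h0]
      · rw [ih (w.drop k) (by simp at hw ⊢; omega), mul_zero]

end Lemmas3
section Lemmas4
variable {K : Type*} [Field K]

/-- The finset of words of length at most `n`. -/
def wordsUpTo (n : ℕ) : Finset Word :=
  (Finset.range (n+1)).biUnion fun k =>
    Finset.image (fun u : Fin k → Fin 2 => List.ofFn u) Finset.univ

lemma mem_wordsUpTo {n : ℕ} {u : Word} : u ∈ wordsUpTo n ↔ u.length ≤ n := by
  simp only [wordsUpTo, Finset.mem_biUnion, Finset.mem_image, Finset.mem_range,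
    Finset.mem_univ, true_and]
  constructor
  · rintro ⟨k, hk, v, rfl⟩
    simp; omega
  · intro hu
    exact ⟨u.length, by omega, fun i => u.get i, List.ofFn_get u⟩

lemma subst_eq_sum (f h : Word → K) (w : Word) :
    subst f h w = ∑ u ∈ wordsUpTo w.length, f u * substCoeff h u w := by
  unfold subst wordsUpTo
  rw [Finset.sum_biUnion]
  · apply Finset.sum_congr rfl
    intro k _
    rw [Finset.sum_image (fun a _ b _ hab => List.ofFn_injective hab)]
  · intro k hk l hl hkl
    simp only [Function.onFun]
    rw [Finset.disjoint_left]
    intro u hu hu'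
    simp only [Finset.mem_image, Finset.mem_univ, true_and] at hu hu'
    obtain ⟨v, rfl⟩ := hu
    obtain ⟨v', hv'⟩ := hu'
    apply hkl
    have := congrArg List.length hv'
    simp at this
    omega

lemma subst_nil (f h : Word → K) : subst f h [] = f [] := by
  rw [subst_eq_sum]
  simp only [List.length_nil]
  have : wordsUpTo 0 = {([] : Word)} := by
    ext u
    simp [mem_wordsUpTo, List.length_eq_zero_iff]
  rw [this]
  simp [substCoeff_nil, seriesOne]

lemma subst_one (h : Word → K) : subst (seriesOne : Word → K) h = seriesOne := by
  funext w
  rw [subst_eq_sum, Finset.sum_eq_single_of_mem ([] : Word) (by simp [mem_wordsUpTo])]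
  · simp [seriesOne, substCoeff_nil]
  · intro u hu hune
    simp [seriesOne, hune]

lemma substCoeff_single0 (h : Word → K) (w : Word) :
    substCoeff h [0] w = e0Series w := by
  rw [substCoeff_cons0, substCoeff_nil]
  cases w with
  | nil => rw [e0Series_mul_nil]; simp [e0Series]
  | cons b w' =>
    rw [e0Series_mul_cons]
    rcases (by omega : b = 0 ∨ b = 1) with rfl | rfl <;>
      simp [seriesOne, e0Series]

lemma subst_e0 (h : Word → K) : subst (e0Series : Word → K) h = e0Series := by
  funext w
  rw [subst_eq_sum]
  by_cases hw : w = []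
  · subst hw
    simp only [List.length_nil]
    have : wordsUpTo 0 = {([] : Word)} := by
      ext u; simp [mem_wordsUpTo, List.length_eq_zero_iff]
    rw [this]
    simp [e0Series, substCoeff_nil]
  · rw [Finset.sum_eq_single_of_mem ([0] : Word)]
    · rw [substCoeff_single0]; simp [e0Series]
    · rw [mem_wordsUpTo]
      cases w with
      | nil => exact absurd rfl hw
      | cons b w' => simp
    · intro u hu hune
      simp [e0Series, hune]

lemma substCoeff_single1 (h : Word → K) (w : Word) :
    substCoeff h [1] w = h w := by
  rw [substCoeff_cons1, substCoeff_nil, seriesMul_one]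

lemma subst_e1 (h : Word → K) (h0 : h [] = 0) :
    subst (e1Series : Word → K) h = h := by
  funext w
  rw [subst_eq_sum]
  by_cases hw : w = []
  · subst hw
    simp only [List.length_nil]
    have : wordsUpTo 0 = {([] : Word)} := by
      ext u; simp [mem_wordsUpTo, List.length_eq_zero_iff]
    rw [this]
    simp [e1Series, substCoeff_nil, h0]
  · rw [Finset.sum_eq_single_of_mem ([1] : Word)]
    · rw [substCoeff_single1]; simp [e1Series]
    · rw [mem_wordsUpTo]
      cases w with
      | nil => exact absurd rfl hw
      | cons b w' => simp
    · intro u hu hune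
      simp [e1Series, hune]

end Lemmas4
section Lemmas5
variable {K : Type*} [Field K]

lemma wordsUpTo_mono {m n : ℕ} (hmn : m ≤ n) : wordsUpTo m ⊆ wordsUpTo n := by
  intro u hu
  rw [mem_wordsUpTo] at hu ⊢
  omega

lemma sum_wordsUpTo_extend {m n : ℕ} (hmn : m ≤ n) (G : Word → K)
    (hG : ∀ u : Word, m < u.length → G u = 0) :
    ∑ u ∈ wordsUpTo m, G u = ∑ u ∈ wordsUpTo n, G u := by
  apply Finset.sum_subset (wordsUpTo_mono hmn)
  intro u hu hnu
  rw [mem_wordsUpTo] at hnu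
  exact hG u (by omega)

lemma sum_split_pairs (n : ℕ) (F : Word → Word → K)
    (hF : ∀ u1 u2 : Word, n < u1.length + u2.length → F u1 u2 = 0) :
    ∑ u ∈ wordsUpTo n, ∑ j ∈ Finset.range (u.length + 1), F (u.take j) (u.drop j) =
      ∑ u1 ∈ wordsUpTo n, ∑ u2 ∈ wordsUpTo n, F u1 u2 := by
  rw [← Finset.sum_product']
  rw [Finset.sum_sigma']
  rw [show ((wordsUpTo n) ×ˢ (wordsUpTo n) : Finset (Word × Word)) =
    ((wordsUpTo n) ×ˢ (wordsUpTo n)) from rfl]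
  rw [← Finset.sum_filter_add_sum_filter_not ((wordsUpTo n) ×ˢ (wordsUpTo n))
    (fun p => p.1.length + p.2.length ≤ n)]
  have hzero : ∑ p ∈ ((wordsUpTo n) ×ˢ (wordsUpTo n)).filter
      (fun p => ¬ p.1.length + p.2.length ≤ n), F p.1 p.2 = 0 := by
    apply Finset.sum_eq_zero
    intro p hp
    rw [Finset.mem_filter] at hp
    exact hF p.1 p.2 (by omega)
  rw [hzero, add_zero]
  apply Finset.sum_nbij' (i := fun p : (Σ _ : Word, ℕ) => (p.1.take p.2, p.1.drop p.2))
    (j := fun p : Word × Word => ⟨p.1 ++ p.2, p.1.length⟩)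
  · rintro ⟨u, j⟩ hu
    rw [Finset.mem_sigma, mem_wordsUpTo, Finset.mem_range] at hu
    rw [Finset.mem_filter, Finset.mem_product, mem_wordsUpTo, mem_wordsUpTo]
    dsimp only at hu ⊢
    simp only [List.length_take, List.length_drop]
    omega
  · rintro ⟨u1, u2⟩ hu
    rw [Finset.mem_filter, Finset.mem_product, mem_wordsUpTo, mem_wordsUpTo] at hu
    rw [Finset.mem_sigma, mem_wordsUpTo, Finset.mem_range]
    dsimp only at hu ⊢
    simp only [List.length_append]
    omega
  · rintro ⟨u, j⟩ hu
    rw [Finset.mem_sigma, mem_wordsUpTo, Finset.mem_range] at hu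
    dsimp only at hu ⊢
    simp only [List.take_append_drop]
    congr 1
    rw [List.length_take]
    omega
  · rintro ⟨u1, u2⟩ hu
    simp only [List.take_left, List.drop_left]
  · rintro ⟨u, j⟩ hu
    simp only [List.take_append_drop]

lemma subst_mul (f g h : Word → K) (h0 : h [] = 0) :
    subst (seriesMul f g) h = seriesMul (subst f h) (subst g h) := by
  funext w
  set n := w.length with hn
  -- middle form
  have key : ∀ (u1 u2 : Word), n < u1.length + u2.length →
      ∀ m ∈ Finset.range (n+1),
      substCoeff h u1 (w.take m) * substCoeff h u2 (w.drop m) = 0 := by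
    intro u1 u2 hlen m hm
    rw [Finset.mem_range] at hm
    by_cases h1 : m < u1.length
    · rw [substCoeff_low h h0 u1 (w.take m) (by rw [List.length_take]; omega), zero_mul]
    · rw [substCoeff_low h h0 u2 (w.drop m) (by rw [List.length_drop]; omega), mul_zero]
  -- LHS
  rw [subst_eq_sum]
  have lhs1 : ∑ u ∈ wordsUpTo n, seriesMul f g u * substCoeff h u w =
      ∑ u ∈ wordsUpTo n, ∑ j ∈ Finset.range (u.length + 1),
        f (u.take j) * g (u.drop j) * substCoeff h ((u.take j) ++ (u.drop j)) w := by
    apply Finset.sum_congr rfl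
    intro u _
    unfold seriesMul
    rw [Finset.sum_mul]
    apply Finset.sum_congr rfl
    intro j _
    rw [List.take_append_drop]
  rw [lhs1, sum_split_pairs n
    (fun u1 u2 => f u1 * g u2 * substCoeff h (u1 ++ u2) w) (by
      intro u1 u2 hlen
      show f u1 * g u2 * substCoeff h (u1 ++ u2) w = 0
      rw [substCoeff_low h h0 (u1 ++ u2) w (by rw [List.length_append]; omega), mul_zero])]

  -- expand substCoeff of append into sum over m
  have lhs2 : ∑ u1 ∈ wordsUpTo n, ∑ u2 ∈ wordsUpTo n,
      f u1 * g u2 * substCoeff h (u1 ++ u2) w =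
      ∑ m ∈ Finset.range (n+1), ∑ u1 ∈ wordsUpTo n, ∑ u2 ∈ wordsUpTo n,
        (f u1 * substCoeff h u1 (w.take m)) * (g u2 * substCoeff h u2 (w.drop m)) := by
    have step1 : ∑ u1 ∈ wordsUpTo n, ∑ u2 ∈ wordsUpTo n,
        f u1 * g u2 * substCoeff h (u1 ++ u2) w =
        ∑ u1 ∈ wordsUpTo n, ∑ m ∈ Finset.range (n+1), ∑ u2 ∈ wordsUpTo n,
          (f u1 * substCoeff h u1 (w.take m)) * (g u2 * substCoeff h u2 (w.drop m)) := by
      apply Finset.sum_congr rfl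
      intro u1 _
      rw [← Finset.sum_comm]
      apply Finset.sum_congr rfl
      intro u2 _
      rw [substCoeff_append]
      unfold seriesMul
      rw [Finset.mul_sum]
      apply Finset.sum_congr rfl
      intro m _
      ring
    rw [step1, Finset.sum_comm]
  rw [lhs2]
  -- RHS
  unfold seriesMul
  apply Finset.sum_congr rfl
  intro m hm
  rw [Finset.mem_range] at hm
  rw [subst_eq_sum, subst_eq_sum]
  have htake : (w.take m).length = m := by rw [List.length_take]; omega
  have hdrop : (w.drop m).length = n - m := by rw [List.length_drop]
  rw [htake, hdrop]
  rw [sum_wordsUpTo_extend (by omega : m ≤ n)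
    (fun u => f u * substCoeff h u (w.take m)) (by
      intro u hu
      show f u * substCoeff h u (w.take m) = 0
      rw [substCoeff_low h h0 u (w.take m) (by rw [htake]; omega), mul_zero])]
  rw [sum_wordsUpTo_extend (by omega : n - m ≤ n)
    (fun u => g u * substCoeff h u (w.drop m)) (by
      intro u hu
      show g u * substCoeff h u (w.drop m) = 0
      rw [substCoeff_low h h0 u (w.drop m) (by rw [hdrop]; omega), mul_zero])]
  rw [Finset.sum_mul]
  apply Finset.sum_congr rfl
  intro u1 _
  rw [Finset.mul_sum]

end Lemmas5
section Lemmas6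
variable {K : Type*} [Field K]

lemma subst_monomial (k h : Word → K) (h0 : h [] = 0) (u : Word) :
    subst (substCoeff k u) h = substCoeff (subst k h) u := by
  induction u with
  | nil => rw [substCoeff_nil, substCoeff_nil, subst_one]
  | cons a u ih =>
    rw [substCoeff_cons, substCoeff_cons, subst_mul _ _ _ h0, ih]
    rcases (by omega : a = 0 ∨ a = 1) with rfl | rfl
    · simp [subst_e0]
    · norm_num

lemma subst_comp (f k h : Word → K) (hk : k [] = 0) (hh : h [] = 0) :
    subst (subst f k) h = subst f (subst k h) := by
  funext w
  set n := w.length with hn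
  rw [subst_eq_sum, subst_eq_sum]
  have step1 : ∑ u ∈ wordsUpTo n, subst f k u * substCoeff h u w =
      ∑ u ∈ wordsUpTo n, ∑ v ∈ wordsUpTo n,
        f v * substCoeff k v u * substCoeff h u w := by
    apply Finset.sum_congr rfl
    intro u hu
    rw [mem_wordsUpTo] at hu
    rw [subst_eq_sum]
    rw [sum_wordsUpTo_extend hu (fun v => f v * substCoeff k v u) (by
      intro v hv
      show f v * substCoeff k v u = 0
      rw [substCoeff_low k hk v u hv, mul_zero])]
    rw [Finset.sum_mul]
  rw [step1, Finset.sum_comm]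
  apply Finset.sum_congr rfl
  intro v _
  have inner : ∑ u ∈ wordsUpTo n, f v * substCoeff k v u * substCoeff h u w =
      f v * ∑ u ∈ wordsUpTo n, substCoeff k v u * substCoeff h u w := by
    rw [Finset.mul_sum]
    apply Finset.sum_congr rfl
    intro u _
    ring
  rw [inner, ← subst_eq_sum (substCoeff k v) h w, subst_monomial k h hh v]

lemma subst_const (f h : Word → K) : subst f h [] = f [] := subst_nil f h

lemma subst_inv (g h : Word → K) (hg : g [] = 1) (hh : h [] = 0) :
    subst (seriesInv g) h = seriesInv (subst g h) := by
  have hsg : subst g h [] = 1 := by rw [subst_nil, hg]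
  refine inv_unique' (subst g h) (subst (seriesInv g) h) (seriesInv (subst g h)) ?_ ?_
  · rw [← subst_mul _ _ _ hh, seriesMul_inv g hg, subst_one]
  · exact seriesInv_mul _ hsg

lemma substCoeff_e1_delta (u w : Word) :
    substCoeff (e1Series : Word → K) u w = if u = w then 1 else 0 := by
  induction u generalizing w with
  | nil =>
    rw [substCoeff_nil]
    unfold seriesOne
    by_cases hw : w = [] <;> simp [hw]
  | cons a u ih =>
    rcases (by omega : a = 0 ∨ a = 1) with rfl | rfl
    · rw [substCoeff_cons0]
      cases w with
      | nil => rw [e0Series_mul_nil]; simp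
      | cons b w' =>
        rw [e0Series_mul_cons, ih]
        rcases (by omega : b = 0 ∨ b = 1) with rfl | rfl <;> simp
    · rw [substCoeff_cons1]
      unfold seriesMul
      cases w with
      | nil => simp [e1Series]
      | cons b w' =>
        rw [Finset.sum_eq_single_of_mem 1 (by simp)]
        · rw [ih]
          simp only [List.take_cons, List.drop_succ_cons, List.take_zero, List.drop_zero]
          rcases (by omega : b = 0 ∨ b = 1) with rfl | rfl <;> simp [e1Series]
        · intro m hm hm1
          rw [Finset.mem_range] at hm
          have : List.take m (b :: w') ≠ [1] := by
            intro hh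
            have := congrArg List.length hh
            rw [List.length_take] at this
            simp at this hm
            omega
          simp [e1Series, this]

lemma subst_id (f : Word → K) : subst f e1Series = f := by
  funext w
  rw [subst_eq_sum, Finset.sum_eq_single_of_mem w (by simp [mem_wordsUpTo])]
  · rw [substCoeff_e1_delta]; simp
  · intro u _ hune
    rw [substCoeff_e1_delta, if_neg hune, mul_zero]

lemma adE1_nil (g : Word → K) : adE1 g [] = 0 := by
  unfold adE1
  rw [seriesMul_nil, seriesMul_nil]
  simp [e1Series]

end Lemmas6
section Lemmas7
variable {K : Type*} [Field K]

lemma ihara_nil (g f : Word → K) : ihara g f [] = g [] * f [] := by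
  unfold ihara
  rw [seriesMul_nil, subst_nil]

lemma adE1_ihara (g h : Word → K) (hg : g [] = 1) (hh : h [] = 1) :
    adE1 (ihara h g) = subst (adE1 g) (adE1 h) := by
  have hσg : subst g (adE1 h) [] = 1 := by rw [subst_nil, hg]
  show adE1 (seriesMul h (subst g (adE1 h))) = subst (adE1 g) (adE1 h)
  set σg := subst g (adE1 h) with hσdef
  rw [show adE1 (seriesMul h σg) =
    seriesMul (seriesMul (seriesInv (seriesMul h σg)) e1Series) (seriesMul h σg) from rfl]
  rw [seriesInv_mul_rev h σg hh hσg]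
  rw [show (adE1 g : Word → K) = seriesMul (seriesMul (seriesInv g) e1Series) g from rfl]
  rw [subst_mul _ _ _ (adE1_nil h), subst_mul _ _ _ (adE1_nil h),
    subst_inv g _ hg (adE1_nil h), subst_e1 _ (adE1_nil h), ← hσdef]
  rw [show (adE1 h : Word → K) = seriesMul (seriesMul (seriesInv h) e1Series) h from rfl]
  simp only [seriesMul_assoc]

lemma ihara_assoc (f g h : Word → K) (hg : g [] = 1) (hh : h [] = 1) :
    ihara (ihara h g) f = ihara h (ihara g f) := by
  show seriesMul (ihara h g) (subst f (adE1 (ihara h g))) =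
    seriesMul h (subst (ihara g f) (adE1 h))
  rw [adE1_ihara g h hg hh, ← subst_comp f (adE1 g) (adE1 h) (adE1_nil g) (adE1_nil h)]
  rw [show ihara g f = seriesMul g (subst f (adE1 g)) from rfl,
    subst_mul _ _ _ (adE1_nil h)]
  rw [show ihara h g = seriesMul h (subst g (adE1 h)) from rfl, seriesMul_assoc]

lemma adE1_one : adE1 (seriesOne : Word → K) = e1Series := by
  unfold adE1
  rw [seriesInv_one, seriesOne_mul, seriesMul_one]

lemma ihara_one_left (f : Word → K) : ihara seriesOne f = f := by
  unfold ihara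
  rw [seriesOne_mul, adE1_one, subst_id]

lemma ihara_one_right (f : Word → K) : ihara f seriesOne = f := by
  unfold ihara
  rw [subst_one, seriesMul_one]

end Lemmas7
section Lemmas8
variable {K : Type*} [Field K]

/-- Agreement of two series up to (word length) order `m`. -/
def Eqv (m : ℕ) (a b : Word → K) : Prop := ∀ v : Word, v.length ≤ m → a v = b v

lemma Eqv.mono {m m' : ℕ} {a b : Word → K} (h : Eqv m' a b) (hm : m ≤ m') :
    Eqv m a b := fun v hv => h v (le_trans hv hm)

lemma Eqv.trans {m : ℕ} {a b c : Word → K} (h1 : Eqv m a b) (h2 : Eqv m b c) :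
    Eqv m a c := fun v hv => (h1 v hv).trans (h2 v hv)

lemma seriesInv_congr {m : ℕ} {a b : Word → K} (H : Eqv m a b) :
    Eqv m (seriesInv a) (seriesInv b) := by
  suffices key : ∀ n (v : Word), v.length ≤ n → v.length ≤ m →
      seriesInv a v = seriesInv b v by
    intro v hv
    exact key v.length v le_rfl hv
  intro n
  induction n with
  | zero =>
    intro v hv _
    rw [Nat.le_zero, List.length_eq_zero_iff] at hv
    subst hv
    rw [seriesInv_nil, seriesInv_nil]
  | succ n ih =>
    intro v hv hvm
    cases v with
    | nil => rw [seriesInv_nil, seriesInv_nil]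
    | cons x w =>
      rw [show seriesInv a (x :: w) =
        -∑ k ∈ Finset.range (w.length + 1), a (x :: w.take k) * seriesInv a (w.drop k)
        from by rw [seriesInv]]
      rw [show seriesInv b (x :: w) =
        -∑ k ∈ Finset.range (w.length + 1), b (x :: w.take k) * seriesInv b (w.drop k)
        from by rw [seriesInv]]
      congr 1
      apply Finset.sum_congr rfl
      intro k hk
      simp only [List.length_cons] at hv hvm
      have h1 : (x :: w.take k).length ≤ m := by
        simp only [List.length_cons, List.length_take]
        omega
      have h2 : (w.drop k).length ≤ n ∧ (w.drop k).length ≤ m := by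
        constructor <;> (rw [List.length_drop]; omega)
      rw [H _ h1, ih (w.drop k) h2.1 h2.2]

lemma substCoeff_congr {h h' : Word → K} (u w : Word)
    (hw : ∀ v : Word, v.length ≤ w.length → h v = h' v) :
    substCoeff h u w = substCoeff h' u w := by
  induction u generalizing w with
  | nil => rfl
  | cons a u ih =>
    rcases (by omega : a = 0 ∨ a = 1) with rfl | rfl
    · rw [substCoeff_cons0, substCoeff_cons0]
      cases w with
      | nil => rw [e0Series_mul_nil, e0Series_mul_nil]
      | cons b w' =>
        rw [e0Series_mul_cons, e0Series_mul_cons]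
        by_cases hb : b = 0
        · rw [if_pos hb, if_pos hb, ih w' (fun v hv => hw v (by simp; omega))]
        · rw [if_neg hb, if_neg hb]
    · rw [substCoeff_cons1, substCoeff_cons1]
      unfold seriesMul
      apply Finset.sum_congr rfl
      intro k hk
      rw [hw _ (by rw [List.length_take]; omega),
        ih (w.drop k) (fun v hv => hw v (by simp only [List.length_drop] at hv; omega))]

lemma adE1_congr {m : ℕ} {a b : Word → K} (H : Eqv m a b) :
    Eqv (m+1) (adE1 a) (adE1 b) := by
  intro v hv
  show seriesMul (seriesMul (seriesInv a) e1Series) a v =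
    seriesMul (seriesMul (seriesInv b) e1Series) b v
  rw [show seriesMul (seriesMul (seriesInv a) e1Series) a v =
      ∑ k ∈ Finset.range (v.length + 1),
        seriesMul (seriesInv a) e1Series (v.take k) * a (v.drop k) from rfl,
    show seriesMul (seriesMul (seriesInv b) e1Series) b v =
      ∑ k ∈ Finset.range (v.length + 1),
        seriesMul (seriesInv b) e1Series (v.take k) * b (v.drop k) from rfl]
  apply Finset.sum_congr rfl
  intro k hk
  rw [Finset.mem_range] at hk
  by_cases hy : ∃ j ∈ Finset.range ((v.take k).length + 1),
    (v.take k).drop j = [1]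
  · -- there is a nonzero e1 factor; then all relevant words are short
    have hak : (v.drop k).length ≤ m := by
      obtain ⟨j, hj, hj1⟩ := hy
      rw [Finset.mem_range] at hj
      have := congrArg List.length hj1
      simp only [List.length_drop, List.length_take, List.length_cons,
        List.length_nil] at this
      rw [List.length_drop]
      omega
    rw [H _ hak]
    congr 1
    unfold seriesMul
    apply Finset.sum_congr rfl
    intro j hj
    rw [Finset.mem_range] at hj
    by_cases hj1 : (v.take k).drop j = [1]
    · have hlen : ((v.take k).take j).length ≤ m := by
        have := congrArg List.length hj1
        simp only [List.length_drop, List.length_take, List.length_cons,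
          List.length_nil] at this
        simp only [List.length_take]
        omega
      rw [seriesInv_congr H _ hlen]
    · simp [e1Series, hj1]
  · -- all e1 factors vanish
    push_neg at hy
    have z1 : seriesMul (seriesInv a) e1Series (v.take k) = 0 := by
      unfold seriesMul
      apply Finset.sum_eq_zero
      intro j hj
      simp [e1Series, hy j hj]
    have z2 : seriesMul (seriesInv b) e1Series (v.take k) = 0 := by
      unfold seriesMul
      apply Finset.sum_eq_zero
      intro j hj
      simp [e1Series, hy j hj]
    rw [z1, z2, zero_mul, zero_mul]

lemma subst_congr {m : ℕ} {h h' : Word → K} (f : Word → K) (H : Eqv m h h') :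
    Eqv m (subst f h) (subst f h') := by
  intro v hv
  rw [subst_eq_sum, subst_eq_sum]
  apply Finset.sum_congr rfl
  intro u _
  rw [substCoeff_congr u v (fun v' hv' => H v' (le_trans hv' hv))]

/-- One step of the fixed-point iteration computing the Ihara inverse. -/
def phiStep (f a : Word → K) : Word → K := seriesInv (subst f (adE1 a))

lemma phiStep_congr {m : ℕ} {a b : Word → K} (f : Word → K) (H : Eqv m a b) :
    Eqv (m+1) (phiStep f a) (phiStep f b) :=
  seriesInv_congr (subst_congr f (adE1_congr H))

/-- The Ihara inverse, extracted from the stabilizing fixed-point iteration. -/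
def iharaInvFun (f : Word → K) : Word → K :=
  fun w => (phiStep f)^[w.length + 1] seriesOne w

lemma iter_congr (f : Word → K) :
    ∀ m, Eqv m ((phiStep f)^[m] seriesOne) ((phiStep f)^[m+1] seriesOne) := by
  intro m
  induction m with
  | zero =>
    intro v hv
    rw [Nat.le_zero, List.length_eq_zero_iff] at hv
    subst hv
    show (seriesOne : Word → K) [] = (phiStep f)^[0+1] seriesOne []
    rw [show (0:ℕ)+1 = 1 from rfl, Function.iterate_one,
      show phiStep f seriesOne [] = 1 from seriesInv_nil _]
    simp [seriesOne]
  | succ m ih =>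
    rw [Function.iterate_succ_apply', Function.iterate_succ_apply']
    exact phiStep_congr f ih

lemma iter_stable (f : Word → K) {m m' : ℕ} (hmm : m ≤ m') :
    Eqv m ((phiStep f)^[m] seriesOne) ((phiStep f)^[m'] seriesOne) := by
  induction m' with
  | zero =>
    have : m = 0 := by omega
    subst this
    intro v hv; rfl
  | succ m' ih =>
    by_cases hc : m ≤ m'
    · exact (ih hc).trans ((iter_congr f m').mono hc)
    · have : m = m' + 1 := by omega
      subst this
      intro v hv; rfl

lemma iharaInvFun_eqv (f : Word → K) (m : ℕ) :
    Eqv m (iharaInvFun f) ((phiStep f)^[m] seriesOne) := by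
  intro v hv
  show (phiStep f)^[v.length + 1] seriesOne v = _
  rcases le_or_gt (v.length + 1) m with hc | hc
  · exact iter_stable f hc v (by omega)
  · have : m ≤ v.length + 1 := by omega
    exact (iter_stable f this v hv).symm

lemma iharaInvFun_fixed (f : Word → K) :
    iharaInvFun f = phiStep f (iharaInvFun f) := by
  funext w
  have h1 : iharaInvFun f w = phiStep f ((phiStep f)^[w.length] seriesOne) w := by
    show (phiStep f)^[w.length + 1] seriesOne w = _
    rw [Function.iterate_succ_apply']
  rw [h1]
  exact (phiStep_congr f (iharaInvFun_eqv f w.length) w (by omega)).symm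

lemma iharaInvFun_nil (f : Word → K) : iharaInvFun f [] = 1 := by
  show (phiStep f)^[1] seriesOne [] = 1
  simp only [Function.iterate_one]
  exact seriesInv_nil _

lemma ihara_left_inv (f : Word → K) (hf : f [] = 1) :
    ihara (iharaInvFun f) f = seriesOne := by
  show seriesMul (iharaInvFun f) (subst f (adE1 (iharaInvFun f))) = seriesOne
  nth_rewrite 1 [iharaInvFun_fixed f]
  exact seriesInv_mul _ (by rw [subst_nil, hf])

end Lemmas8
/-- The set `G` of noncommutative power series `f ∈ K⟨⟨e₀,e₁⟩⟩` with constant coefficient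
`f[∅] = 1` is a group under the Ihara (twisted Magnus) product
`g ∘ f = g · f(e₀, g⁻¹ e₁ g)`: the product is closed on `G`, associative,
has the constant series `1` as a two-sided unit, and every element of `G` has a
two-sided inverse in `G`. -/
theorem ihara_group {K : Type*} [Field K] :
    (∀ f g : Word → K, f [] = 1 → g [] = 1 → (ihara g f) [] = 1) ∧
    (∀ f g h : Word → K, f [] = 1 → g [] = 1 → h [] = 1 →
      ihara (ihara h g) f = ihara h (ihara g f)) ∧
    (∀ f : Word → K, f [] = 1 → ihara seriesOne f = f ∧ ihara f seriesOne = f) ∧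
    (∀ f : Word → K, f [] = 1 →
      ∃ f' : Word → K, f' [] = 1 ∧ ihara f' f = seriesOne ∧ ihara f f' = seriesOne) := by
  refine ⟨?_, ?_, ?_, ?_⟩
  · intro f g hf hg
    rw [ihara_nil, hf, hg, mul_one]
  · intro f g h hf hg hh
    exact ihara_assoc f g h hg hh
  · intro f hf
    exact ⟨ihara_one_left f, ihara_one_right f⟩
  · intro f hf
    set f' := iharaInvFun f with hf'def
    have hf' : f' [] = 1 := iharaInvFun_nil f
    have left1 : ihara f' f = seriesOne := ihara_left_inv f hf
    set f'' := iharaInvFun f' with hf''def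
    have hf'' : f'' [] = 1 := iharaInvFun_nil f'
    have left2 : ihara f'' f' = seriesOne := ihara_left_inv f' hf'
    refine ⟨f', hf', left1, ?_⟩
    -- f ∘ f' = 1
    have hX : ihara f f' [] = 1 := by rw [ihara_nil, hf, hf', mul_one]
    have e1 : ihara f' (ihara f f') = f' := by
      rw [← ihara_assoc f' f f' hf hf', left1, ihara_one_left]
    have e2 : ihara f'' (ihara f' (ihara f f')) = ihara f f' := by
      rw [← ihara_assoc (ihara f f') f' f'' hf' hf'', left2, ihara_one_left]
    rw [e1, left2] at e2
    exact e2.symm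
end
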